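/- For every $k \ge 1$, $T \ge 1$, consider the set cover instance with $kT$ unit-cost sets indexed by $(i,j) \in [k] \times [T]$ and $kT$ elements indexed by $(i,j)$, where element $(i,j)$ is contained in set $(i',j)$ iff $i' \ge i$. Any deterministic algorithm that, upon arrival of each element, must have total fractional mass at least 1 on sets containing it (only increasing variables), where elements arrive in lexicographic order of $(i,j)$, incurs, against a uniformly random relabeling of the first index, expected cost at least $T \cdot H_k$ where $H_k = \sum_{i=1}^k 1/i$, while there is a feasible solution (all sets $(k, j)$) of cost $T$. -/
import Mathlib


/-- Theorem 2.2 lower bound construction: a set cover instance with `k*T`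
unit-cost sets and elements indexed by `(i,j) ∈ [k] × [T]`, where element
`(i,j)` is contained in set `(i',j)` iff `i ≤ i'`.  The first index is
relabeled by a uniformly random permutation `σ`, so element `(i,j)` is
contained in set `(p,j)` iff `i ≤ σ⁻¹ p`.  Any deterministic online algorithm
(`X σ i j` is its fractional solution after serving element `(i,j)`;
variables are in `[0,1]`, only increase along the lexicographic arrival order,
cover each arrived element, and after round `i` depend only on `σ` restricted
to rounds before `i`) has expected cost at least `T * H_k`, while for every
`σ` there is a feasible solution of cost `T`. -/
theorem stmt_7 (k T : ℕ) (hk : 1 ≤ k) (hT : 1 ≤ T)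
    (X : Equiv.Perm (Fin k) → Fin k → Fin T → Fin k × Fin T → ℝ)
    -- variables lie in [0,1]
    (hbox : ∀ σ i j e, X σ i j e ∈ Set.Icc (0 : ℝ) 1)
    -- variables only increase, elements arriving in lexicographic order of (i,j)
    (hmono : ∀ σ (i i' : Fin k) (j j' : Fin T),
        ((i : ℕ) < (i' : ℕ) ∨ (i = i' ∧ (j : ℕ) ≤ (j' : ℕ))) →
        ∀ e, X σ i j e ≤ X σ i' j' e)
    -- upon arrival of element (i,j), total mass on sets containing it is ≥ 1;
    -- under relabeling σ, element (i,j) is contained in set (p,j) iff i ≤ σ⁻¹ p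
    (hcover : ∀ σ (i : Fin k) (j : Fin T),
        1 ≤ ∑ p ∈ Finset.univ.filter (fun p : Fin k => i ≤ σ.symm p),
              X σ i j (p, j))
    -- the algorithm is deterministic and online: its solution after round i
    -- depends only on the instance revealed so far, i.e. on σ before round i
    (honline : ∀ (σ σ' : Equiv.Perm (Fin k)) (i : Fin k) (j : Fin T),
        (∀ r : Fin k, (r : ℕ) < (i : ℕ) → σ r = σ' r) → X σ i j = X σ' i j) :
    -- expected final cost over a uniformly random σ is at least T * H_k ...
    ((k.factorial : ℝ) * ((T : ℝ) * ∑ i ∈ Finset.range k, (1 : ℝ) / (i + 1)) ≤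
        ∑ σ : Equiv.Perm (Fin k),
          ∑ e : Fin k × Fin T, X σ ⟨k - 1, by omega⟩ ⟨T - 1, by omega⟩ e) ∧
    -- ... while there is a feasible solution (all sets (k, j)) of cost T
    (∀ σ : Equiv.Perm (Fin k), ∃ y : Fin k × Fin T → ℝ,
        (∀ e, y e ∈ Set.Icc (0 : ℝ) 1) ∧
        (∀ (i : Fin k) (j : Fin T),
            1 ≤ ∑ p ∈ Finset.univ.filter (fun p : Fin k => i ≤ σ.symm p),
                  y (p, j)) ∧
        ∑ e : Fin k × Fin T, y e = (T : ℝ)) := by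
  constructor
  · -- lower bound
    set li : Fin k := ⟨k - 1, by omega⟩ with hli
    set lj : Fin T := ⟨T - 1, by omega⟩ with hlj
    have hcard : ∀ i : Fin k,
        (Finset.univ.filter (fun q : Fin k => i ≤ q)).card = k - i := by
      intro i
      have h : Finset.univ.filter (fun q : Fin k => i ≤ q) = Finset.Ici i := by
        ext q; simp
      rw [h, Fin.card_Ici]
    -- reindexed cover constraint
    have hcov' : ∀ (σ : Equiv.Perm (Fin k)) (i : Fin k) (j : Fin T),
        (1:ℝ) ≤ ∑ q ∈ Finset.univ.filter (fun q : Fin k => i ≤ q),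
            X σ i j (σ q, j) := by
      intro σ i j
      have h1 := hcover σ i j
      have heq : ∑ q ∈ Finset.univ.filter (fun q : Fin k => i ≤ q), X σ i j (σ q, j)
          = ∑ p ∈ Finset.univ.filter (fun p : Fin k => i ≤ σ.symm p), X σ i j (p, j) := by
        apply Finset.sum_equiv (σ : Fin k ≃ Fin k)
        · intro q; simp
        · intro q _; rfl
      rw [heq]; exact h1
    -- swap bijection
    have hswap : ∀ (i : Fin k) (j : Fin T) (q : Fin k), i ≤ q →
        ∑ σ : Equiv.Perm (Fin k), X σ i j (σ q, j)
          = ∑ σ : Equiv.Perm (Fin k), X σ i j (σ i, j) := by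
      intro i j q hq
      rw [← Equiv.sum_comp (Equiv.mulRight (Equiv.swap i q))
        (fun σ => X σ i j (σ q, j))]
      apply Finset.sum_congr rfl
      intro σ _
      show X (σ * Equiv.swap i q) i j ((σ * Equiv.swap i q) q, j) = X σ i j (σ i, j)
      have h1 : X (σ * Equiv.swap i q) i j = X σ i j := by
        apply honline
        intro r hr
        have hri : r ≠ i := Fin.ne_of_lt (Fin.lt_def.mpr hr)
        have hrq : r ≠ q := Fin.ne_of_lt (Fin.lt_def.mpr (lt_of_lt_of_le hr hq))
        simp [Equiv.Perm.mul_apply, Equiv.swap_apply_of_ne_of_ne hri hrq]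
      have h2 : (σ * Equiv.swap i q) q = σ i := by
        simp [Equiv.Perm.mul_apply]
      rw [h1, h2]
    -- key inequality per (i,j)
    have key : ∀ (i : Fin k) (j : Fin T),
        (k.factorial : ℝ) / ((k : ℝ) - (i : ℕ))
          ≤ ∑ σ : Equiv.Perm (Fin k), X σ i j (σ i, j) := by
      intro i j
      have hik : (i : ℕ) < k := i.isLt
      have hki : (0:ℝ) < (k:ℝ) - (i : ℕ) := by
        have h : ((i:ℕ):ℝ) < (k:ℝ) := by exact_mod_cast hik
        linarith
      have h1 : (k.factorial : ℝ)
          ≤ ∑ σ : Equiv.Perm (Fin k), ∑ q ∈ Finset.univ.filter (fun q : Fin k => i ≤ q),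
              X σ i j (σ q, j) := by
        calc (k.factorial : ℝ)
            = ∑ _σ : Equiv.Perm (Fin k), (1:ℝ) := by
              rw [Finset.sum_const, nsmul_eq_mul, mul_one, Finset.card_univ,
                Fintype.card_perm, Fintype.card_fin]
          _ ≤ _ := Finset.sum_le_sum (fun σ _ => hcov' σ i j)
      have h2 : ∑ σ : Equiv.Perm (Fin k),
            ∑ q ∈ Finset.univ.filter (fun q : Fin k => i ≤ q), X σ i j (σ q, j)
          = ((k : ℝ) - (i:ℕ)) * ∑ σ : Equiv.Perm (Fin k), X σ i j (σ i, j) := by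
        rw [Finset.sum_comm]
        rw [Finset.sum_congr rfl
          (fun q hq => hswap i j q (by simpa using hq))]
        rw [Finset.sum_const, nsmul_eq_mul, hcard]
        congr 1
        rw [Nat.cast_sub (le_of_lt hik)]
      rw [div_le_iff₀ hki]
      rw [h2] at h1
      linarith
    -- harmonic sum identity
    have hsum : ∑ n ∈ Finset.range k, (k.factorial : ℝ) / ((k:ℝ) - (n:ℕ))
        = (k.factorial : ℝ) * ∑ n ∈ Finset.range k, (1:ℝ)/((n:ℕ) + 1) := by
      rw [← Finset.sum_range_reflect (fun n => (k.factorial:ℝ)/((k:ℝ) - (n:ℕ))) k]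
      rw [Finset.mul_sum]
      apply Finset.sum_congr rfl
      intro n hn
      have hn' : n < k := Finset.mem_range.mp hn
      have hc : ((k : ℝ) - ((k - 1 - n : ℕ):ℕ)) = (n:ℕ) + 1 := by
        have h3 : (k - 1 - n : ℕ) = k - (n+1) := by omega
        rw [h3, Nat.cast_sub (by omega)]
        push_cast; ring
      rw [hc, div_eq_mul_inv, one_div]
    -- assembly
    have step1 : ∑ i : Fin k, ∑ j : Fin T, ∑ σ : Equiv.Perm (Fin k), X σ i j (σ i, j)
        ≤ ∑ σ : Equiv.Perm (Fin k), ∑ e : Fin k × Fin T, X σ li lj e := by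
      have hσ : ∀ σ : Equiv.Perm (Fin k),
          ∑ i : Fin k, ∑ j : Fin T, X σ i j (σ i, j)
            ≤ ∑ e : Fin k × Fin T, X σ li lj e := by
        intro σ
        have hA : ∑ e : Fin k × Fin T, X σ li lj e
            = ∑ i : Fin k, ∑ j : Fin T, X σ li lj (σ i, j) := by
          rw [Fintype.sum_prod_type]
          exact (Equiv.sum_comp (σ : Fin k ≃ Fin k)
            (fun p => ∑ j : Fin T, X σ li lj (p, j))).symm
        rw [hA]
        apply Finset.sum_le_sum; intro i _
        apply Finset.sum_le_sum; intro j _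
        apply hmono
        rcases Nat.lt_or_ge (i : ℕ) (k - 1) with h | h
        · exact Or.inl h
        · right
          constructor
          · apply Fin.ext; simp [hli]; omega
          · have := j.isLt; simp [hlj]; omega
      calc ∑ i : Fin k, ∑ j : Fin T, ∑ σ : Equiv.Perm (Fin k), X σ i j (σ i, j)
          = ∑ σ : Equiv.Perm (Fin k), ∑ i : Fin k, ∑ j : Fin T, X σ i j (σ i, j) := by
            rw [Finset.sum_congr rfl
              (fun (i : Fin k) _ => Finset.sum_comm (s := Finset.univ)
                (t := Finset.univ) (f := fun j σ => X σ i j (σ i, j)))]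
            exact Finset.sum_comm
        _ ≤ _ := Finset.sum_le_sum (fun σ _ => hσ σ)
    have step2 : (k.factorial : ℝ) * ((T : ℝ) * ∑ n ∈ Finset.range k, (1:ℝ)/((n:ℕ)+1))
        ≤ ∑ i : Fin k, ∑ j : Fin T, ∑ σ : Equiv.Perm (Fin k), X σ i j (σ i, j) := by
      have h1 : (k.factorial : ℝ) * ((T : ℝ) * ∑ n ∈ Finset.range k, (1:ℝ)/((n:ℕ)+1))
          = ∑ i : Fin k, ∑ _j : Fin T, (k.factorial : ℝ) / ((k:ℝ) - (i:ℕ)) := by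
        have h2 : ∀ i : Fin k, ∑ _j : Fin T, (k.factorial : ℝ) / ((k:ℝ) - (i:ℕ))
            = (T:ℝ) * ((k.factorial : ℝ) / ((k:ℝ) - (i:ℕ))) := by
          intro i
          rw [Finset.sum_const, nsmul_eq_mul, Finset.card_univ, Fintype.card_fin]
        rw [Finset.sum_congr rfl (fun i _ => h2 i), ← Finset.mul_sum,
          Fin.sum_univ_eq_sum_range (fun n => (k.factorial:ℝ)/((k:ℝ) - (n:ℕ))) k, hsum]
        ring
      rw [h1]
      apply Finset.sum_le_sum; intro i _
      apply Finset.sum_le_sum; intro j _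
      exact key i j
    calc (k.factorial : ℝ) * ((T : ℝ) * ∑ n ∈ Finset.range k, (1:ℝ)/((n:ℕ)+1))
        ≤ ∑ i : Fin k, ∑ j : Fin T, ∑ σ : Equiv.Perm (Fin k), X σ i j (σ i, j) := step2
      _ ≤ _ := step1
  · -- feasibility
    intro σ
    refine ⟨fun e => if e.1 = σ ⟨k - 1, by omega⟩ then 1 else 0, ?_, ?_, ?_⟩
    · intro e; by_cases h : e.1 = σ ⟨k - 1, by omega⟩ <;> simp [h]
    · intro i j
      rw [Finset.sum_ite_eq' (Finset.univ.filter (fun p : Fin k => i ≤ σ.symm p))]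
      have hle : i ≤ (⟨k - 1, by omega⟩ : Fin k) := by
        have := i.isLt
        exact Fin.le_def.mpr (by simp; omega)
      simp [Finset.mem_filter, Equiv.symm_apply_apply, hle]
    · rw [Fintype.sum_prod_type_right]
      simp [Finset.sum_ite_eq']
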